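/- For every polynomial f (or more generally every function analytic on a neighborhood (−ε, ε) of 0 with everywhere-convergent manipulations), and every t with 0 < t < ε: ∫_{-∞}^{∞} (t^α / Γ(α+1)) · D^α[f(·/2)](t) dα = f(t), where D^α is the Riemann–Liouville fractional derivative of order α with base point 0, applied termwise to the power series of f. -/

import Mathlib

set_option maxHeartbeats 1000000
open Real Filter MeasureTheory Finset Polynomial

noncomputable def G (x : ℝ) : ℝ := (Real.Gamma x)⁻¹

lemma contG : Continuous G := by
  have h : Continuous fun x : ℝ => ((Complex.Gamma (x : ℂ))⁻¹).re :=
    (Complex.continuous_re.comp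
      (Complex.differentiable_one_div_Gamma.continuous.comp Complex.continuous_ofReal))
  have : (fun x : ℝ => ((Complex.Gamma (x : ℂ))⁻¹).re) = G := by
    funext x
    simp [G, Complex.Gamma_ofReal, ← Complex.ofReal_inv]
  rwa [this] at h

lemma recG (x : ℝ) : G x = x * G (x + 1) := by
  rcases eq_or_ne x 0 with rfl | hx
  · simp [G, Real.Gamma_zero]
  · rw [G, G, Real.Gamma_add_one hx, mul_inv]
    rw [← mul_assoc, mul_inv_cancel₀ hx, one_mul]

noncomputable def B (k : ℕ) (α : ℝ) : ℝ := G (α + 1) * G ((k : ℝ) + 1 - α)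

lemma contB (k : ℕ) : Continuous (B k) := by
  exact (contG.comp (continuous_id.add continuous_const)).mul
    (contG.comp (continuous_const.sub continuous_id))

lemma pascalB (k : ℕ) (α : ℝ) : ((k : ℝ) + 1) * B (k + 1) α = B k α + B k (α - 1) := by
  have h1 : G (α - 1 + 1) = (α) * G (α + 1) := by
    have := recG α; rw [sub_add_cancel]; linarith [recG α]
  have h2 : G ((k : ℝ) + 1 - α) = ((k : ℝ) + 1 - α) * G ((k : ℝ) + 1 + 1 - α) := by
    have := recG ((k : ℝ) + 1 - α)
    rw [this]; ring_nf
  unfold B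
  push_cast
  rw [h2, h1]
  have h3 : (k : ℝ) + 1 - (α - 1) = (k:ℝ) + 1 + 1 - α := by ring
  rw [h3]
  ring

lemma GmulG (α : ℝ) : G α * G (1 - α) = Real.sin (π * α) / π := by
  rw [G, G, ← mul_inv, Real.Gamma_mul_Gamma_one_sub, inv_div]

lemma B0_eq {α : ℝ} (hα : α ≠ 0) : B 0 α = Real.sin (π * α) / (π * α) := by
  have h1 : G (α + 1) = G α / α := by
    rw [recG α]; field_simp
  rw [B, h1]
  push_cast
  rw [zero_add, div_mul_eq_mul_div, GmulG, div_div]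

lemma B0_zero : B 0 0 = 1 := by
  simp [B, G, Real.Gamma_one]

lemma B0_bound {x : ℝ} (hx : 0 < x) : |B 0 x| ≤ 1 / (π * x) := by
  rw [B0_eq hx.ne', abs_div, abs_of_pos (by positivity : (0:ℝ) < π * x)]
  apply div_le_div_of_nonneg_right ?_ (by positivity)
  exact abs_le.mpr ⟨Real.neg_one_le_sin _, Real.sin_le_one _⟩

lemma B0_even (x : ℝ) : B 0 (-x) = B 0 x := by
  unfold B
  push_cast
  have h1 : -x + 1 = 1 - x := by ring
  have h2 : (0:ℝ) + 1 - -x = x + 1 := by ring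
  have h3 : (0:ℝ) + 1 - x = 1 - x := by ring
  rw [h1, h2, h3, mul_comm]

lemma sum_rec (k : ℕ) (α : ℝ) :
    ∑ j ∈ Finset.range (k+2), ((k+1).choose j : ℝ) * B 0 (α - j) =
      ∑ j ∈ Finset.range (k+1), (k.choose j : ℝ) * B 0 (α - j) +
        ∑ j ∈ Finset.range (k+1), (k.choose j : ℝ) * B 0 ((α - 1) - j) := by
  rw [Finset.sum_range_succ']
  have h1 : ∀ i ∈ Finset.range (k+1),
      (((k+1).choose (i+1) : ℝ)) * B 0 (α - (i+1 : ℕ)) =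
        (k.choose i : ℝ) * B 0 ((α - 1) - i) + (k.choose (i+1) : ℝ) * B 0 (α - (i+1 : ℕ)) := by
    intro i _
    rw [Nat.choose_succ_succ]
    push_cast
    have : α - (i + 1 : ℝ) = (α - 1) - i := by ring
    rw [this, add_mul]
  rw [Finset.sum_congr rfl h1, Finset.sum_add_distrib]
  have h2 : ∑ i ∈ Finset.range (k+1), (k.choose (i+1) : ℝ) * B 0 (α - (i+1 : ℕ)) +
      ((k+1).choose 0 : ℝ) * B 0 (α - (0 : ℕ)) =
      ∑ j ∈ Finset.range (k+1), (k.choose j : ℝ) * B 0 (α - j) := by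
    have e1 := Finset.sum_range_succ' (fun j => (k.choose j : ℝ) * B 0 (α - j)) (k+1)
    have e2 := Finset.sum_range_succ (fun j => (k.choose j : ℝ) * B 0 (α - j)) (k+1)
    simp only [Nat.choose_succ_self, Nat.cast_zero, zero_mul, add_zero] at e2
    rw [Nat.choose_zero_right]
    calc ∑ i ∈ Finset.range (k+1), (k.choose (i+1) : ℝ) * B 0 (α - (i+1:ℕ)) +
          ((1:ℕ) : ℝ) * B 0 (α - (0:ℕ))
        = ∑ i ∈ Finset.range (k+1), (k.choose (i+1) : ℝ) * B 0 (α - (i+1:ℕ)) +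
          (k.choose 0 : ℝ) * B 0 (α - (0:ℕ)) := by rw [Nat.choose_zero_right]
      _ = ∑ j ∈ Finset.range (k+2), (k.choose j : ℝ) * B 0 (α - j) := e1.symm
      _ = ∑ j ∈ Finset.range (k+1), (k.choose j : ℝ) * B 0 (α - j) := e2
  linarith [h2]

lemma B_eq_sum (k : ℕ) (α : ℝ) :
    B k α = (Nat.factorial k : ℝ)⁻¹ * ∑ j ∈ Finset.range (k+1), (k.choose j : ℝ) * B 0 (α - j) := by
  induction k generalizing α with
  | zero => simp
  | succ k ih =>
    have hpos : ((k : ℝ) + 1) ≠ 0 := by positivity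
    have key : ((k : ℝ) + 1) * B (k+1) α =
        ((k : ℝ) + 1) * ((Nat.factorial (k+1) : ℝ)⁻¹ * ∑ j ∈ Finset.range (k+2),
          (((k+1).choose j : ℝ)) * B 0 (α - j)) := by
      rw [pascalB, ih, ih, sum_rec]
      rw [Nat.factorial_succ]
      push_cast
      rw [mul_inv, ← mul_assoc, ← mul_assoc, mul_inv_cancel₀ (by positivity : ((k:ℝ)+1) ≠ 0),
        one_mul, mul_add]
    exact mul_left_cancel₀ hpos key

lemma exp_int {a : ℝ} (ha : 0 < a) : ∫ t in Set.Ioi (0:ℝ), Real.exp (-(a*t)) = 1/a := by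
  have hderiv : ∀ x ∈ Set.Ici (0:ℝ),
      HasDerivAt (fun t => -Real.exp (-(a*t)) / a) (Real.exp (-(a*x))) x := by
    intro x _
    have h1 : HasDerivAt (fun t : ℝ => -(a*t)) (-a) x := by
      exact ((hasDerivAt_id x).const_mul a).neg.congr_deriv (by ring)
    have h2 := (h1.exp).neg.div_const a
    refine h2.congr_deriv ?_
    rw [div_eq_iff ha.ne']; ring
  have hint : IntegrableOn (fun t => Real.exp (-(a*t))) (Set.Ioi (0:ℝ)) := by
    simpa [mul_comm] using exp_neg_integrableOn_Ioi 0 ha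
  have htends : Tendsto (fun t => -Real.exp (-(a*t)) / a) atTop (nhds 0) := by
    have : Tendsto (fun t : ℝ => -(a*t)) atTop atBot := by
      apply tendsto_neg_atBot_iff.mpr
      exact Tendsto.const_mul_atTop ha tendsto_id
    have := (Real.tendsto_exp_atBot.comp this).neg.div_const a
    simpa using this
  have := integral_Ioi_of_hasDerivAt_of_tendsto' hderiv hint htends
  rw [this]
  simp [div_eq_mul_inv]

lemma inner_deriv (t x : ℝ) :
    HasDerivAt (fun x : ℝ => -(Real.exp (-(x*t)) * (Real.cos x + t * Real.sin x)) / (1+t^2))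
      (Real.exp (-(x*t)) * Real.sin x) x := by
  have hg : HasDerivAt (fun x : ℝ => Real.exp (-(x*t))) (-t * Real.exp (-(x*t))) x := by
    have h1 : HasDerivAt (fun x : ℝ => -(x*t)) (-t) x := by
      exact ((hasDerivAt_id x).mul_const t).neg.congr_deriv (by ring)
    simpa [mul_comm] using h1.exp
  have hh : HasDerivAt (fun x : ℝ => Real.cos x + t * Real.sin x)
      (-Real.sin x + t * Real.cos x) x :=
    (Real.hasDerivAt_cos x).add ((Real.hasDerivAt_sin x).const_mul t)
  have := ((hg.mul hh).neg).div_const (1+t^2)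
  refine this.congr_deriv ?_
  have ht : (1:ℝ) + t^2 ≠ 0 := by positivity
  rw [div_eq_iff ht]
  ring

lemma inner_int (t T : ℝ) :
    ∫ x in (0:ℝ)..T, Real.exp (-(x*t)) * Real.sin x =
      (1 - Real.exp (-(T*t)) * (Real.cos T + t * Real.sin T)) / (1+t^2) := by
  have hcont : Continuous fun x : ℝ => Real.exp (-(x*t)) * Real.sin x := by
    exact ((Real.continuous_exp.comp (by continuity)).mul Real.continuous_sin)
  rw [intervalIntegral.integral_eq_sub_of_hasDerivAt
    (fun x _ => inner_deriv t x) (hcont.intervalIntegrable 0 T)]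
  simp [Real.cos_zero, Real.sin_zero]
  ring

lemma norm_int_eq {x : ℝ} (hx : 0 < x) :
    ∫ t in Set.Ioi (0:ℝ), ‖Real.exp (-(x*t)) * Real.sin x‖ = |Real.sin x| / x := by
  have : ∀ t : ℝ, ‖Real.exp (-(x*t)) * Real.sin x‖ = Real.exp (-(x*t)) * |Real.sin x| := by
    intro t
    rw [norm_mul, Real.norm_eq_abs, Real.norm_eq_abs, abs_of_pos (Real.exp_pos _)]
  simp_rw [this]
  rw [MeasureTheory.integral_mul_const, exp_int hx]
  ring

lemma fubini_integrable (T : ℝ) :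
    Integrable (Function.uncurry fun x t => Real.exp (-(x*t)) * Real.sin x)
      ((volume.restrict (Set.Ioc (0:ℝ) T)).prod (volume.restrict (Set.Ioi (0:ℝ)))) := by
  have hcont : Continuous (Function.uncurry fun x t : ℝ => Real.exp (-(x*t)) * Real.sin x) := by
    apply Continuous.mul
    · exact Real.continuous_exp.comp (by fun_prop)
    · exact Real.continuous_sin.comp continuous_fst
  rw [MeasureTheory.integrable_prod_iff hcont.aestronglyMeasurable]
  simp only [Function.uncurry_apply_pair]
  constructor
  · rw [MeasureTheory.ae_restrict_iff' measurableSet_Ioc]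
    filter_upwards with x
    intro hx
    have hint : IntegrableOn (fun t => Real.exp (-(x*t))) (Set.Ioi (0:ℝ)) := by
      simpa [mul_comm, neg_mul] using exp_neg_integrableOn_Ioi 0 hx.1
    exact hint.mul_const _
  · apply MeasureTheory.Integrable.mono' (g := fun _ : ℝ => (1:ℝ))
    · exact integrable_const _
    · exact hcont.aestronglyMeasurable.norm.integral_prod_right'
    · rw [MeasureTheory.ae_restrict_iff' measurableSet_Ioc]
      filter_upwards with x
      intro hx
      rw [Real.norm_eq_abs, norm_int_eq hx.1, abs_of_nonneg (div_nonneg (abs_nonneg _) hx.1.le)]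
      rw [div_le_one hx.1]
      calc |Real.sin x| ≤ |x| := Real.abs_sin_le_abs
        _ = x := abs_of_pos hx.1

lemma fubini_step {T : ℝ} (hT : 0 < T) :
    ∫ x in (0:ℝ)..T, Real.sin x / x =
      ∫ t in Set.Ioi (0:ℝ),
        (1 - Real.exp (-(T*t)) * (Real.cos T + t * Real.sin T)) / (1+t^2) := by
  rw [intervalIntegral.integral_of_le hT.le]
  have h1 : ∀ x ∈ Set.Ioc (0:ℝ) T,
      Real.sin x / x = ∫ t in Set.Ioi (0:ℝ), Real.exp (-(x*t)) * Real.sin x := by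
    intro x hx
    rw [MeasureTheory.integral_mul_const, exp_int hx.1]
    ring
  rw [setIntegral_congr_fun measurableSet_Ioc h1]
  have swap := MeasureTheory.integral_integral_swap (fubini_integrable T)
  rw [swap]
  apply setIntegral_congr_fun measurableSet_Ioi
  intro t _
  dsimp only
  rw [← intervalIntegral.integral_of_le hT.le, inner_int]

lemma remainder_integrable {T : ℝ} (hT : 0 < T) :
    Integrable (fun t : ℝ => Real.exp (-(T*t)) * (Real.cos T + t * Real.sin T) / (1+t^2))
      (volume.restrict (Set.Ioi (0:ℝ))) := by
  apply MeasureTheory.Integrable.mono' (g := fun t : ℝ => 2 * Real.exp (-(T*t)))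
  · apply Integrable.const_mul
    exact (by simpa [mul_comm, neg_mul] using exp_neg_integrableOn_Ioi 0 hT :
      IntegrableOn (fun x : ℝ => Real.exp (-(T * x))) (Set.Ioi 0))
  · apply Continuous.aestronglyMeasurable
    apply Continuous.div
    · fun_prop
    · fun_prop
    · intro t; positivity
  · rw [MeasureTheory.ae_restrict_iff' measurableSet_Ioi]
    filter_upwards with t ht
    have ht0 : (0:ℝ) < t := ht
    rw [Real.norm_eq_abs, abs_div, abs_of_pos (by positivity : (0:ℝ) < 1 + t^2), abs_mul,
      abs_of_pos (Real.exp_pos _)]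
    rw [div_le_iff₀ (by positivity : (0:ℝ) < 1 + t^2)]
    have h1 : |Real.cos T + t * Real.sin T| ≤ 1 + t := by
      calc |Real.cos T + t * Real.sin T| ≤ |Real.cos T| + |t * Real.sin T| := abs_add_le _ _
        _ ≤ 1 + t := by
            rw [abs_mul, abs_of_pos ht0]
            have := Real.abs_cos_le_one T
            have := Real.abs_sin_le_one T
            nlinarith
    have h2 : (1 + t) ≤ 2 * (1 + t^2) := by nlinarith
    calc Real.exp (-(T*t)) * |Real.cos T + t * Real.sin T|
        ≤ Real.exp (-(T*t)) * (1+t) := by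
          exact mul_le_mul_of_nonneg_left h1 (Real.exp_pos _).le
      _ ≤ 2 * Real.exp (-(T*t)) * (1 + t^2) := by nlinarith [Real.exp_pos (-(T*t))]

lemma remainder_tendsto :
    Tendsto (fun T : ℝ => ∫ t in Set.Ioi (0:ℝ),
        Real.exp (-(T*t)) * (Real.cos T + t * Real.sin T) / (1+t^2)) atTop (nhds 0) := by
  apply squeeze_zero_norm' (a := fun T : ℝ => 2 / T) ?_ ?_
  · filter_upwards [eventually_gt_atTop (0:ℝ)] with T hT
    have hbound : ∀ᵐ t ∂(volume.restrict (Set.Ioi (0:ℝ))),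
        ‖Real.exp (-(T*t)) * (Real.cos T + t * Real.sin T) / (1+t^2)‖ ≤ 2 * Real.exp (-(T*t)) := by
      rw [MeasureTheory.ae_restrict_iff' measurableSet_Ioi]
      filter_upwards with t ht
      have ht0 : (0:ℝ) < t := ht
      rw [Real.norm_eq_abs, abs_div, abs_of_pos (by positivity : (0:ℝ) < 1 + t^2), abs_mul,
        abs_of_pos (Real.exp_pos _), div_le_iff₀ (by positivity : (0:ℝ) < 1 + t^2)]
      have h1 : |Real.cos T + t * Real.sin T| ≤ 1 + t := by
        calc |Real.cos T + t * Real.sin T| ≤ |Real.cos T| + |t * Real.sin T| := abs_add_le _ _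
          _ ≤ 1 + t := by
              rw [abs_mul, abs_of_pos ht0]
              have := Real.abs_cos_le_one T
              have := Real.abs_sin_le_one T
              nlinarith
      have h2 : (1 + t) ≤ 2 * (1 + t^2) := by nlinarith
      calc Real.exp (-(T*t)) * |Real.cos T + t * Real.sin T|
          ≤ Real.exp (-(T*t)) * (1+t) := mul_le_mul_of_nonneg_left h1 (Real.exp_pos _).le
        _ ≤ 2 * Real.exp (-(T*t)) * (1 + t^2) := by nlinarith [Real.exp_pos (-(T*t))]
    have hgint : Integrable (fun t : ℝ => 2 * Real.exp (-(T*t)))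
        (volume.restrict (Set.Ioi (0:ℝ))) := by
      apply Integrable.const_mul
      exact (by simpa [mul_comm, neg_mul] using exp_neg_integrableOn_Ioi 0 hT :
        IntegrableOn (fun x : ℝ => Real.exp (-(T * x))) (Set.Ioi 0))
    calc ‖∫ t in Set.Ioi (0:ℝ), Real.exp (-(T*t)) * (Real.cos T + t * Real.sin T) / (1+t^2)‖
        ≤ ∫ t in Set.Ioi (0:ℝ), 2 * Real.exp (-(T*t)) :=
          norm_integral_le_of_norm_le hgint hbound
      _ = 2 / T := by
          rw [MeasureTheory.integral_const_mul, exp_int hT]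
          ring
  · exact Tendsto.div_atTop tendsto_const_nhds tendsto_id

lemma dirichlet : Tendsto (fun T : ℝ => ∫ x in (0:ℝ)..T, Real.sin x / x) atTop (nhds (π/2)) := by
  have key : ∀ᶠ T in atTop, (∫ x in (0:ℝ)..T, Real.sin x / x) =
      π/2 - ∫ t in Set.Ioi (0:ℝ),
        Real.exp (-(T*t)) * (Real.cos T + t * Real.sin T) / (1+t^2) := by
    filter_upwards [eventually_gt_atTop (0:ℝ)] with T hT
    rw [fubini_step hT]
    have hsplit : ∀ t : ℝ, (1 - Real.exp (-(T*t)) * (Real.cos T + t * Real.sin T)) / (1+t^2) =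
        (1+t^2)⁻¹ - Real.exp (-(T*t)) * (Real.cos T + t * Real.sin T) / (1+t^2) := by
      intro t
      rw [sub_div, inv_eq_one_div]
    simp_rw [hsplit]
    rw [MeasureTheory.integral_sub (integrable_inv_one_add_sq.integrableOn)
      (remainder_integrable hT), integral_Ioi_inv_one_add_sq]
    simp
  apply Tendsto.congr' (key.mono fun T h => h.symm)
  simpa using (tendsto_const_nhds (x := π/2)).sub remainder_tendsto

lemma B0_int_eq {R : ℝ} :
    ∫ x in (0:ℝ)..R, B 0 x = π⁻¹ * ∫ u in (0:ℝ)..(π*R), Real.sin u / u := by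
  have hae : ∀ᵐ x : ℝ, x ∈ Set.uIoc (0:ℝ) R → B 0 x = Real.sin (π*x) / (π*x) := by
    have h0 : ∀ᵐ x : ℝ, x ≠ 0 := by
      rw [MeasureTheory.ae_iff]
      have hset : {x : ℝ | ¬ x ≠ 0} = {0} := by ext x; simp
      rw [hset]
      exact Real.volume_singleton
    filter_upwards [h0] with x hx _
    exact B0_eq hx
  rw [intervalIntegral.integral_congr_ae hae]
  have hsub := intervalIntegral.integral_comp_mul_left (a := (0:ℝ)) (b := R)
    (fun u => Real.sin u / u) Real.pi_ne_zero
  simp only [mul_zero] at hsub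
  rw [hsub, smul_eq_mul]

lemma B0_sym_int {R : ℝ} :
    ∫ x in (-R)..R, B 0 x = 2 * ∫ x in (0:ℝ)..R, B 0 x := by
  have h1 : ∫ x in (-R)..(0:ℝ), B 0 x = ∫ x in (0:ℝ)..R, B 0 x := by
    have h := intervalIntegral.integral_comp_neg (a := (0:ℝ)) (b := R) (B 0)
    simp_rw [B0_even, neg_zero] at h
    exact h.symm
  rw [← intervalIntegral.integral_add_adjacent_intervals
    (a := -R) (b := 0) (c := R) ((contB 0).intervalIntegrable _ _)
    ((contB 0).intervalIntegrable _ _), h1]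
  ring

lemma B0_tendsto : Tendsto (fun R : ℝ => ∫ x in (-R)..R, B 0 x) atTop (nhds 1) := by
  have h1 : Tendsto (fun R : ℝ => ∫ u in (0:ℝ)..(π*R), Real.sin u / u) atTop (nhds (π/2)) :=
    dirichlet.comp (Tendsto.const_mul_atTop Real.pi_pos tendsto_id)
  have h2 : Tendsto (fun R : ℝ => 2 * (π⁻¹ * ∫ u in (0:ℝ)..(π*R), Real.sin u / u))
      atTop (nhds (2 * (π⁻¹ * (π/2)))) := (h1.const_mul _).const_mul _
  have heq : (fun R : ℝ => ∫ x in (-R)..R, B 0 x) =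
      fun R : ℝ => 2 * (π⁻¹ * ∫ u in (0:ℝ)..(π*R), Real.sin u / u) := by
    funext R
    rw [B0_sym_int, B0_int_eq]
  rw [heq]
  convert h2 using 2
  field_simp

lemma B0_shift_tendsto {c : ℝ} (hc : 0 ≤ c) :
    Tendsto (fun R : ℝ => ∫ α in (-R)..R, B 0 (α - c)) atTop (nhds 1) := by
  have heq : ∀ R : ℝ, ∫ α in (-R)..R, B 0 (α - c) =
      (∫ x in (-(R+c))..(R+c), B 0 x) - ∫ x in (R-c)..(R+c), B 0 x := by
    intro R
    rw [intervalIntegral.integral_comp_sub_right (B 0) c]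
    have hadj := intervalIntegral.integral_add_adjacent_intervals
      (a := -(R+c)) (b := R-c) (c := R+c)
      ((contB 0).intervalIntegrable (μ := volume) _ _)
      ((contB 0).intervalIntegrable (μ := volume) _ _)
    have h1 : -R - c = -(R+c) := by ring
    rw [h1]
    linarith [hadj]
  simp_rw [heq]
  have h1 : Tendsto (fun R : ℝ => ∫ x in (-(R+c))..(R+c), B 0 x) atTop (nhds 1) :=
    B0_tendsto.comp (tendsto_atTop_add_const_right atTop c tendsto_id)
  have h2 : Tendsto (fun R : ℝ => ∫ x in (R-c)..(R+c), B 0 x) atTop (nhds 0) := by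
    apply squeeze_zero_norm' (a := fun R : ℝ => 1 / (π*(R-c)) * (2*c)) ?_ ?_
    · filter_upwards [eventually_ge_atTop (c+1)] with R hR
      have hRc : (0:ℝ) < R - c := by linarith
      have hbound : ∀ x ∈ Set.uIoc (R-c) (R+c), ‖B 0 x‖ ≤ 1 / (π*(R-c)) := by
        intro x hx
        rw [Set.uIoc_of_le (by linarith : R-c ≤ R+c)] at hx
        have hx0 : 0 < x := lt_trans hRc hx.1
        rw [Real.norm_eq_abs]
        calc |B 0 x| ≤ 1 / (π*x) := B0_bound hx0
          _ ≤ 1 / (π*(R-c)) := by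
              apply one_div_le_one_div_of_le (by positivity)
              exact mul_le_mul_of_nonneg_left hx.1.le Real.pi_pos.le
      calc ‖∫ x in (R-c)..(R+c), B 0 x‖ ≤ 1 / (π*(R-c)) * |(R+c) - (R-c)| :=
            intervalIntegral.norm_integral_le_of_norm_le_const hbound
        _ = 1 / (π*(R-c)) * (2*c) := by
            rw [show (R+c) - (R-c) = 2*c by ring, abs_of_nonneg (by linarith)]
    · have hdiv : Tendsto (fun R : ℝ => 1 / (π*(R-c))) atTop (nhds 0) :=
        Tendsto.div_atTop tendsto_const_nhds
          (Tendsto.const_mul_atTop Real.pi_pos (tendsto_atTop_add_const_right atTop (-c)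
            tendsto_id))
      simpa using hdiv.mul_const (2*c)
  simpa using h1.sub h2

lemma Bk_tendsto (k : ℕ) :
    Tendsto (fun R : ℝ => ∫ α in (-R)..R, B k α) atTop
      (nhds ((2:ℝ)^k / (Nat.factorial k : ℝ))) := by
  have heq : ∀ R : ℝ, ∫ α in (-R)..R, B k α =
      (Nat.factorial k : ℝ)⁻¹ * ∑ j ∈ Finset.range (k+1),
        (k.choose j : ℝ) * ∫ α in (-R)..R, B 0 (α - j) := by
    intro R
    simp_rw [B_eq_sum k]
    rw [intervalIntegral.integral_const_mul]
    congr 1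
    rw [intervalIntegral.integral_finset_sum]
    · exact Finset.sum_congr rfl fun j _ => (intervalIntegral.integral_const_mul _ _)
    · intro j _
      exact (Continuous.intervalIntegrable (by exact
        (continuous_const.mul ((contB 0).comp (continuous_id.sub continuous_const)))) _ _)
  simp_rw [heq]
  have hlim : Tendsto (fun R : ℝ => ∑ j ∈ Finset.range (k+1),
      (k.choose j : ℝ) * ∫ α in (-R)..R, B 0 (α - j)) atTop
      (nhds (∑ j ∈ Finset.range (k+1), (k.choose j : ℝ) * 1)) := by
    apply tendsto_finset_sum
    intro j _
    exact (B0_shift_tendsto (Nat.cast_nonneg j)).const_mul _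
  have := hlim.const_mul ((Nat.factorial k : ℝ)⁻¹)
  convert this using 2
  simp only [mul_one]
  rw [← Nat.cast_sum, Nat.sum_range_choose]
  rw [div_eq_inv_mul]
  norm_num

theorem main_identity_polynomial (f : Polynomial ℝ) (t : ℝ) (ht : 0 < t) :
    Tendsto (fun R : ℝ => ∫ α in (-R)..R,
        (t ^ α / Real.Gamma (α + 1)) *
          ∑ k ∈ Finset.range (f.natDegree + 1),
            f.coeff k * (1 / 2 ^ k) *
              (Real.Gamma ((k : ℝ) + 1) / Real.Gamma ((k : ℝ) + 1 - α)) * t ^ ((k : ℝ) - α))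
      atTop (nhds (f.eval t)) := by
  set d := f.natDegree with hd
  have hpt : ∀ α : ℝ, (t ^ α / Real.Gamma (α + 1)) *
      ∑ k ∈ Finset.range (d+1), f.coeff k * (1/2^k) *
        (Real.Gamma ((k:ℝ)+1) / Real.Gamma ((k:ℝ)+1-α)) * t ^ ((k:ℝ)-α) =
      ∑ k ∈ Finset.range (d+1),
        (f.coeff k * (1/2^k) * Real.Gamma ((k:ℝ)+1) * t^(k:ℕ)) * B k α := by
    intro α
    rw [Finset.mul_sum]
    apply Finset.sum_congr rfl
    intro k _
    have h1 : t ^ (k:ℕ) = t ^ α * t ^ ((k:ℝ) - α) := by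
      rw [← Real.rpow_add ht, show α + ((k:ℝ) - α) = ((k:ℕ):ℝ) by push_cast; ring,
        Real.rpow_natCast]
    rw [B, G, G, h1]
    field_simp
  have hInt : ∀ R : ℝ, (∫ α in (-R)..R, (t ^ α / Real.Gamma (α + 1)) *
      ∑ k ∈ Finset.range (d+1), f.coeff k * (1/2^k) *
        (Real.Gamma ((k:ℝ)+1) / Real.Gamma ((k:ℝ)+1-α)) * t ^ ((k:ℝ)-α)) =
      ∑ k ∈ Finset.range (d+1),
        (f.coeff k * (1/2^k) * Real.Gamma ((k:ℝ)+1) * t^(k:ℕ)) * ∫ α in (-R)..R, B k α := by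
    intro R
    rw [intervalIntegral.integral_congr (g := fun α => ∑ k ∈ Finset.range (d+1),
      (f.coeff k * (1/2^k) * Real.Gamma ((k:ℝ)+1) * t^(k:ℕ)) * B k α) (fun α _ => hpt α)]
    rw [intervalIntegral.integral_finset_sum]
    · exact Finset.sum_congr rfl fun k _ => intervalIntegral.integral_const_mul _ _
    · intro k _
      exact (continuous_const.mul (contB k)).intervalIntegrable _ _
  simp_rw [hInt]
  have hlim : Tendsto (fun R : ℝ => ∑ k ∈ Finset.range (d+1),
      (f.coeff k * (1/2^k) * Real.Gamma ((k:ℝ)+1) * t^(k:ℕ)) * ∫ α in (-R)..R, B k α)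
      atTop (nhds (∑ k ∈ Finset.range (d+1),
        (f.coeff k * (1/2^k) * Real.Gamma ((k:ℝ)+1) * t^(k:ℕ)) *
          ((2:ℝ)^k / (Nat.factorial k : ℝ)))) := by
    apply tendsto_finset_sum
    intro k _
    exact (Bk_tendsto k).const_mul _
  convert hlim using 2
  rw [Polynomial.eval_eq_sum_range]
  apply Finset.sum_congr rfl
  intro k _
  rw [Real.Gamma_nat_eq_factorial]
  have hfac : (Nat.factorial k : ℝ) ≠ 0 := Nat.cast_ne_zero.mpr (Nat.factorial_ne_zero k)
  have h2 : ((2:ℝ))^k ≠ 0 := by positivity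
  field_simp
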